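/- Positivity of the Dirichlet-to-Neumann operator: in the setting above, with α = inf σ(P₀^N) > 0 the Neumann ground state energy of −Δ + W₀ on Ω₀, and λ₀ < α, there exists ε > 0 such that ⟨T(λ)f, f⟩_{L²(S)} ≥ ε ‖f‖²_{L²(S)} for all 0 ≤ λ ≤ λ₀ and all f ∈ H^{3/2}(S). -/

import Mathlib

open MeasureTheory

noncomputable def pd {d : ℕ} (i : Fin d) (φ : (Fin d → ℝ) → ℝ) (x : Fin d → ℝ) : ℝ :=
  fderiv ℝ φ x (Pi.single i 1)

noncomputable def gradSqd {d : ℕ} (φ : (Fin d → ℝ) → ℝ) (x : Fin d → ℝ) : ℝ :=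
  ∑ i : Fin d, (pd i φ x) ^ 2

noncomputable def lap {d : ℕ} (φ : (Fin d → ℝ) → ℝ) (x : Fin d → ℝ) : ℝ :=
  ∑ i : Fin d, pd i (pd i φ) x

/-- The box `Ω₀ = [0,1]^{d-1} × [−a,0]`. -/
def Omega0 (n : ℕ) (a : ℝ) : Set (Fin (n + 1) → ℝ) :=
  {x | (∀ i : Fin n, x i.castSucc ∈ Set.Icc (0 : ℝ) 1) ∧ x (Fin.last n) ∈ Set.Icc (-a) 0}

lemma pd_contDiff {d : ℕ} (i : Fin d) {φ : (Fin d → ℝ) → ℝ} (h : ContDiff ℝ 2 φ) :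
    ContDiff ℝ 1 (pd i φ) :=
  (h.fderiv_right (by norm_num)).clm_apply contDiff_const

lemma pd_continuous {d : ℕ} (i : Fin d) {φ : (Fin d → ℝ) → ℝ} (h : ContDiff ℝ 1 φ) :
    Continuous (pd i φ) :=
  ((h.fderiv_right (m := 0) (by norm_num)).clm_apply contDiff_const).continuous

lemma pd_mul {d : ℕ} (i : Fin d) {u v : (Fin d → ℝ) → ℝ} {x : Fin d → ℝ}
    (hu : DifferentiableAt ℝ u x) (hv : DifferentiableAt ℝ v x) :
    pd i (fun y => u y * v y) x = pd i u x * v x + u x * pd i v x := by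
  simp only [pd, fderiv_fun_mul hu hv]
  simp [mul_comm]
  ring

section aux
variable {n : ℕ} {a : ℝ}

/-- lower corner -/
noncomputable def cc0 (n : ℕ) (a : ℝ) : Fin (n + 1) → ℝ := Fin.snoc (fun _ => 0) (-a)
/-- upper corner -/
noncomputable def cc1 (n : ℕ) : Fin (n + 1) → ℝ := Fin.snoc (fun _ => 1) 0

lemma Omega0_eq (n : ℕ) (a : ℝ) : Omega0 n a = Set.Icc (cc0 n a) (cc1 n) := by
  ext x
  simp only [Omega0, Set.mem_setOf_eq, Set.mem_Icc, Pi.le_def]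
  constructor
  · rintro ⟨h1, h2⟩
    refine ⟨fun i => ?_, fun i => ?_⟩
    · induction i using Fin.lastCases with
      | last => simpa [cc0, cc1] using h2.1
      | cast j => simpa [cc0, cc1] using (h1 j).1
    · induction i using Fin.lastCases with
      | last => simpa [cc0, cc1] using h2.2
      | cast j => simpa [cc0, cc1] using (h1 j).2
  · rintro ⟨h1, h2⟩
    refine ⟨fun j => ?_, ?_⟩
    · have := h1 j.castSucc; have := h2 j.castSucc
      constructor <;> simp_all [cc0, cc1]
    · have := h1 (Fin.last n); have := h2 (Fin.last n)
      constructor <;> simp_all [cc0, cc1]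

lemma cc_le (ha : 0 < a) : cc0 n a ≤ cc1 n := by
  intro i
  induction i using Fin.lastCases with
  | last => simp [cc0, cc1]; linarith
  | cast j => simp [cc0, cc1]

lemma cc_face0 : (cc0 n a) ∘ (Fin.last n).succAbove = (0 : Fin n → ℝ) := by
  funext j; simp [cc0, Fin.succAbove_last]

lemma cc_face1 : (cc1 n) ∘ (Fin.last n).succAbove = (1 : Fin n → ℝ) := by
  funext j; simp [cc1, Fin.succAbove_last]

lemma green (ha : 0 < a) (lam : ℝ) (W₀ : (Fin (n + 1) → ℝ) → ℝ)
    (f : (Fin n → ℝ) → ℝ) (φ : (Fin (n + 1) → ℝ) → ℝ) (hφ : ContDiff ℝ 2 φ)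
    (hpde : ∀ x ∈ Omega0 n a, -lap φ x + (W₀ x - lam) * φ x = 0)
    (hbc : ∀ x' ∈ Set.Icc (0 : Fin n → ℝ) 1, φ (Fin.snoc x' 0) = f x')
    (hneu : ∀ i : Fin n, ∀ x ∈ Omega0 n a,
        (x i.castSucc = 0 ∨ x i.castSucc = 1) → pd i.castSucc φ x = 0)
    (hbot : ∀ x ∈ Omega0 n a, x (Fin.last n) = -a → pd (Fin.last n) φ x = 0) :
    ∫ x in Set.Icc (cc0 n a) (cc1 n), (gradSqd φ x + (W₀ x - lam) * φ x ^ 2) =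
      ∫ x' in Set.Icc (0 : Fin n → ℝ) 1, pd (Fin.last n) φ (Fin.snoc x' 0) * f x' := by
  have hφ1 : Differentiable ℝ φ := hφ.differentiable (by norm_num)
  have hpdd : ∀ i : Fin (n+1), Differentiable ℝ (pd i φ) :=
    fun i => (pd_contDiff i hφ).differentiable (by norm_num)
  have hdiv : ∀ x, (∑ i, fderiv ℝ (fun y => φ y * pd i φ y) x (Pi.single i 1))
      = gradSqd φ x + φ x * lap φ x := by
    intro x
    have h1 : ∀ i : Fin (n+1), fderiv ℝ (fun y => φ y * pd i φ y) x (Pi.single i 1)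
        = pd i φ x * pd i φ x + φ x * pd i (pd i φ) x := fun i =>
      pd_mul i (hφ1 x) (hpdd i x)
    rw [Finset.sum_congr rfl (fun i _ => h1 i), Finset.sum_add_distrib]
    simp [gradSqd, lap, Finset.mul_sum, sq]
  have key := integral_divergence_of_hasFDerivAt_off_countable (cc0 n a) (cc1 n)
    (cc_le ha) (fun x i => φ x * pd i φ x)
    (fun x => ContinuousLinearMap.pi (fun i => fderiv ℝ (fun y => φ y * pd i φ y) x))
    ∅ Set.countable_empty
    (by
      apply continuousOn_pi.2
      exact fun i => (hφ.continuous.mul (pd_continuous i (hφ.of_le one_le_two))).continuousOn)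
    (by
      intro x hx
      exact hasFDerivAt_pi.2 fun i => ((hφ1 x).mul (hpdd i x)).hasFDerivAt)
    (by
      have : Continuous fun x => gradSqd φ x + φ x * lap φ x := by
        refine Continuous.add ?_ (hφ.continuous.mul ?_)
        · exact continuous_finset_sum _ fun i _ =>
            ((pd_continuous i (hφ.of_le one_le_two)).pow 2)
        · exact continuous_finset_sum _ fun i _ => pd_continuous i (pd_contDiff i hφ)
      have h2 : (fun x => ∑ i, (ContinuousLinearMap.pi
          (fun i => fderiv ℝ (fun y => φ y * pd i φ y) x)) (Pi.single i 1) i)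
          = fun x => gradSqd φ x + φ x * lap φ x := by
        funext x
        simpa using hdiv x
      rw [h2]
      exact this.integrableOn_Icc)
  have hmem : ∀ (i : Fin (n+1)) (v : ℝ), v ∈ Set.Icc (cc0 n a i) (cc1 n i) →
      ∀ y ∈ Set.Icc ((cc0 n a) ∘ i.succAbove) ((cc1 n) ∘ i.succAbove),
      i.insertNth v y ∈ Omega0 n a := by
    intro i v hv y hy; rw [Omega0_eq]; exact Fin.insertNth_mem_Icc.2 ⟨hv, hy⟩
  have hL : (∫ x in Set.Icc (cc0 n a) (cc1 n), ∑ i,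
        (ContinuousLinearMap.pi (fun i => fderiv ℝ (fun y => φ y * pd i φ y) x))
          (Pi.single i 1) i)
      = ∫ x in Set.Icc (cc0 n a) (cc1 n), (gradSqd φ x + (W₀ x - lam) * φ x ^ 2) := by
    apply setIntegral_congr_fun measurableSet_Icc
    intro x hx
    simp only [ContinuousLinearMap.pi_apply]
    rw [hdiv x]
    have hp := hpde x (by rw [Omega0_eq]; exact hx)
    have : lap φ x = (W₀ x - lam) * φ x := by linarith
    rw [this]; ring
  rw [hL] at key
  rw [key, Fin.sum_univ_castSucc]
  have hz : ∀ j : Fin n,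
      ((∫ x in Set.Icc ((cc0 n a) ∘ (Fin.castSucc j).succAbove)
          ((cc1 n) ∘ (Fin.castSucc j).succAbove),
          φ ((Fin.castSucc j).insertNth (cc1 n (Fin.castSucc j)) x) *
            pd (Fin.castSucc j) φ ((Fin.castSucc j).insertNth (cc1 n (Fin.castSucc j)) x)) -
        ∫ x in Set.Icc ((cc0 n a) ∘ (Fin.castSucc j).succAbove)
          ((cc1 n) ∘ (Fin.castSucc j).succAbove),
          φ ((Fin.castSucc j).insertNth (cc0 n a (Fin.castSucc j)) x) *
            pd (Fin.castSucc j) φ ((Fin.castSucc j).insertNth (cc0 n a (Fin.castSucc j)) x)) = 0 := by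
    intro j
    have h1 : ∀ y ∈ Set.Icc ((cc0 n a) ∘ (Fin.castSucc j).succAbove)
        ((cc1 n) ∘ (Fin.castSucc j).succAbove),
        φ ((Fin.castSucc j).insertNth (cc1 n (Fin.castSucc j)) y) *
          pd (Fin.castSucc j) φ ((Fin.castSucc j).insertNth (cc1 n (Fin.castSucc j)) y) = 0 := by
      intro y hy
      have hm := hmem (Fin.castSucc j) (cc1 n (Fin.castSucc j))
        (by constructor <;> simp [cc0, cc1]) y hy
      have := hneu j _ hm (Or.inr (by simp [Fin.insertNth_apply_same, cc1]))
      rw [this, mul_zero]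
    have h0 : ∀ y ∈ Set.Icc ((cc0 n a) ∘ (Fin.castSucc j).succAbove)
        ((cc1 n) ∘ (Fin.castSucc j).succAbove),
        φ ((Fin.castSucc j).insertNth (cc0 n a (Fin.castSucc j)) y) *
          pd (Fin.castSucc j) φ ((Fin.castSucc j).insertNth (cc0 n a (Fin.castSucc j)) y) = 0 := by
      intro y hy
      have hm := hmem (Fin.castSucc j) (cc0 n a (Fin.castSucc j))
        (by constructor <;> simp [cc0, cc1]) y hy
      have := hneu j _ hm (Or.inl (by simp [Fin.insertNth_apply_same, cc0]))
      rw [this, mul_zero]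
    rw [setIntegral_eq_zero_of_forall_eq_zero h1, setIntegral_eq_zero_of_forall_eq_zero h0,
      sub_zero]
  rw [Finset.sum_congr rfl (fun j _ => hz j), Finset.sum_const_zero, zero_add]
  have hback : (∫ x in Set.Icc ((cc0 n a) ∘ (Fin.last n).succAbove)
      ((cc1 n) ∘ (Fin.last n).succAbove),
      φ ((Fin.last n).insertNth (cc0 n a (Fin.last n)) x) *
        pd (Fin.last n) φ ((Fin.last n).insertNth (cc0 n a (Fin.last n)) x)) = 0 := by
    apply setIntegral_eq_zero_of_forall_eq_zero
    intro y hy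
    have hm := hmem (Fin.last n) (cc0 n a (Fin.last n))
      (by constructor <;> simp [cc0, cc1] <;> linarith) y hy
    have := hbot _ hm (by simp [Fin.insertNth_apply_same, cc0])
    rw [this, mul_zero]
  rw [hback, sub_zero, cc_face0, cc_face1]
  apply setIntegral_congr_fun measurableSet_Icc
  intro y hy
  have : cc1 n (Fin.last n) = 0 := by simp [cc1]
  rw [this]
  show φ ((Fin.last n).insertNth 0 y) * pd (Fin.last n) φ ((Fin.last n).insertNth 0 y)
      = pd (Fin.last n) φ (Fin.snoc y 0) * f y
  rw [Fin.insertNth_last', hbc y hy, mul_comm]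


lemma trace_id (ha : 0 < a) (f : (Fin n → ℝ) → ℝ) (φ : (Fin (n + 1) → ℝ) → ℝ)
    (hφ : ContDiff ℝ 2 φ)
    (hbc : ∀ x' ∈ Set.Icc (0 : Fin n → ℝ) 1, φ (Fin.snoc x' 0) = f x') :
    ∫ x in Set.Icc (cc0 n a) (cc1 n),
        (a⁻¹ * (φ x * φ x) + ((x (Fin.last n) + a) / a) *
          (pd (Fin.last n) φ x * φ x + φ x * pd (Fin.last n) φ x)) =
      ∫ x' in Set.Icc (0 : Fin n → ℝ) 1, f x' ^ 2 := by
  set w : (Fin (n+1) → ℝ) → ℝ := fun x => (x (Fin.last n) + a) / a with hwdef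
  have hφ1 : Differentiable ℝ φ := hφ.differentiable (by norm_num)
  have hw' : ∀ x, HasFDerivAt w
      (a⁻¹ • (ContinuousLinearMap.proj (Fin.last n) :
        (Fin (n+1) → ℝ) →L[ℝ] ℝ)) x := by
    intro x
    have h1 : HasFDerivAt (fun x : Fin (n+1) → ℝ => x (Fin.last n))
        (ContinuousLinearMap.proj (Fin.last n) : (Fin (n+1) → ℝ) →L[ℝ] ℝ) x :=
      hasFDerivAt_apply (Fin.last n) x
    simpa [hwdef, div_eq_inv_mul] using (h1.add_const a).const_mul a⁻¹
  have hwd : Differentiable ℝ w := fun x => (hw' x).differentiableAt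
  have hwc : Continuous w := by
    have : Continuous fun x : Fin (n+1) → ℝ => x (Fin.last n) := continuous_apply _
    continuity
  have hpdw : ∀ x, pd (Fin.last n) w x = a⁻¹ := by
    intro x
    rw [pd, (hw' x).fderiv]
    simp
  have hmul : Differentiable ℝ (fun y => w y * (φ y * φ y)) := hwd.mul (hφ1.mul hφ1)
  have hdiv2 : ∀ x, (∑ i : Fin (n+1),
      (if i = Fin.last n then fderiv ℝ (fun y => w y * (φ y * φ y)) x else 0)
        (Pi.single i 1)) =
      a⁻¹ * (φ x * φ x) + w x *
        (pd (Fin.last n) φ x * φ x + φ x * pd (Fin.last n) φ x) := by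
    intro x
    rw [Fin.sum_univ_castSucc]
    have hz : ∀ j : Fin n,
        ((if (j.castSucc : Fin (n+1)) = Fin.last n
          then fderiv ℝ (fun y => w y * (φ y * φ y)) x else 0) :
            (Fin (n+1) → ℝ) →L[ℝ] ℝ) (Pi.single j.castSucc 1) = 0 := by
      intro j
      rw [if_neg (Fin.castSucc_lt_last j).ne]
      simp
    rw [Finset.sum_congr rfl (fun j _ => hz j), Finset.sum_const_zero, zero_add, if_pos rfl]
    have e1 : pd (Fin.last n) (fun y => w y * (φ y * φ y)) x
        = pd (Fin.last n) w x * (φ x * φ x) + w x * pd (Fin.last n) (fun y => φ y * φ y) x :=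
      pd_mul _ (hwd x) ((hφ1 x).mul (hφ1 x))
    have e2 : pd (Fin.last n) (fun y => φ y * φ y) x
        = pd (Fin.last n) φ x * φ x + φ x * pd (Fin.last n) φ x := pd_mul _ (hφ1 x) (hφ1 x)
    show pd (Fin.last n) (fun y => w y * (φ y * φ y)) x = _
    rw [e1, e2, hpdw x]
  have key := integral_divergence_of_hasFDerivAt_off_countable' (cc0 n a) (cc1 n)
    (cc_le ha)
    (fun i x => if i = Fin.last n then w x * (φ x * φ x) else 0)
    (fun i x => if i = Fin.last n then fderiv ℝ (fun y => w y * (φ y * φ y)) x else 0)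
    ∅ Set.countable_empty
    (by
      intro i
      by_cases h : i = Fin.last n
      · simp only [if_pos h]
        exact (hwc.mul (hφ.continuous.mul hφ.continuous)).continuousOn
      · simp only [if_neg h]
        exact continuousOn_const)
    (by
      intro x hx i
      by_cases h : i = Fin.last n
      · simp only [if_pos h]
        exact (hmul x).hasFDerivAt
      · simp only [if_neg h]
        exact hasFDerivAt_const 0 x)
    (by
      have hcont : Continuous fun x => a⁻¹ * (φ x * φ x) + w x *
          (pd (Fin.last n) φ x * φ x + φ x * pd (Fin.last n) φ x) := by
        have hc := pd_continuous (Fin.last n) (hφ.of_le one_le_two)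
        exact (continuous_const.mul (hφ.continuous.mul hφ.continuous)).add
          (hwc.mul ((hc.mul hφ.continuous).add (hφ.continuous.mul hc)))
      have h2 : (fun x => ∑ i : Fin (n+1),
          (if i = Fin.last n then fderiv ℝ (fun y => w y * (φ y * φ y)) x else 0)
            (Pi.single i 1)) =
          fun x => a⁻¹ * (φ x * φ x) + w x *
            (pd (Fin.last n) φ x * φ x + φ x * pd (Fin.last n) φ x) := funext hdiv2
      rw [h2]
      exact hcont.integrableOn_Icc)
  have hL : (∫ x in Set.Icc (cc0 n a) (cc1 n), ∑ i : Fin (n+1),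
      (if i = Fin.last n then fderiv ℝ (fun y => w y * (φ y * φ y)) x else 0)
        (Pi.single i 1)) =
      ∫ x in Set.Icc (cc0 n a) (cc1 n), (a⁻¹ * (φ x * φ x) + w x *
        (pd (Fin.last n) φ x * φ x + φ x * pd (Fin.last n) φ x)) := by
    apply setIntegral_congr_fun measurableSet_Icc
    intro x _
    exact hdiv2 x
  rw [hL] at key
  rw [show (∫ x in Set.Icc (cc0 n a) (cc1 n),
      (a⁻¹ * (φ x * φ x) + ((x (Fin.last n) + a) / a) *
        (pd (Fin.last n) φ x * φ x + φ x * pd (Fin.last n) φ x))) =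
      ∫ x in Set.Icc (cc0 n a) (cc1 n), (a⁻¹ * (φ x * φ x) + w x *
        (pd (Fin.last n) φ x * φ x + φ x * pd (Fin.last n) φ x)) from rfl, key]
  rw [Fin.sum_univ_castSucc]
  have hz : ∀ j : Fin n,
      ((∫ x in Set.Icc ((cc0 n a) ∘ (Fin.castSucc j).succAbove)
          ((cc1 n) ∘ (Fin.castSucc j).succAbove),
          (if (j.castSucc : Fin (n+1)) = Fin.last n
            then w ((Fin.castSucc j).insertNth (cc1 n (Fin.castSucc j)) x) *
              (φ ((Fin.castSucc j).insertNth (cc1 n (Fin.castSucc j)) x) *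
                φ ((Fin.castSucc j).insertNth (cc1 n (Fin.castSucc j)) x)) else 0)) -
        ∫ x in Set.Icc ((cc0 n a) ∘ (Fin.castSucc j).succAbove)
          ((cc1 n) ∘ (Fin.castSucc j).succAbove),
          (if (j.castSucc : Fin (n+1)) = Fin.last n
            then w ((Fin.castSucc j).insertNth (cc0 n a (Fin.castSucc j)) x) *
              (φ ((Fin.castSucc j).insertNth (cc0 n a (Fin.castSucc j)) x) *
                φ ((Fin.castSucc j).insertNth (cc0 n a (Fin.castSucc j)) x)) else 0)) = 0 := by
    intro j
    simp [if_neg (Fin.castSucc_lt_last j).ne]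
  rw [Finset.sum_congr rfl (fun j _ => hz j), Finset.sum_const_zero, zero_add]
  simp only [↓reduceIte]
  have hback : (∫ x in Set.Icc ((cc0 n a) ∘ (Fin.last n).succAbove)
      ((cc1 n) ∘ (Fin.last n).succAbove),
      w ((Fin.last n).insertNth (cc0 n a (Fin.last n)) x) *
        (φ ((Fin.last n).insertNth (cc0 n a (Fin.last n)) x) *
          φ ((Fin.last n).insertNth (cc0 n a (Fin.last n)) x))) = 0 := by
    apply setIntegral_eq_zero_of_forall_eq_zero
    intro y _
    have h1 : cc0 n a (Fin.last n) = -a := by simp [cc0]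
    have h2 : w ((Fin.last n).insertNth (cc0 n a (Fin.last n)) y) = 0 := by
      rw [hwdef]
      simp only [h1, Fin.insertNth_apply_same]
      simp
    rw [h2, zero_mul]
  rw [hback, sub_zero, cc_face0, cc_face1]
  apply setIntegral_congr_fun measurableSet_Icc
  intro y hy
  have h1 : cc1 n (Fin.last n) = 0 := by simp [cc1]
  have h2 : w ((Fin.last n).insertNth (cc1 n (Fin.last n)) y) = 1 := by
    rw [hwdef]
    simp only [h1, Fin.insertNth_apply_same]
    simp [ha.ne']
  show w ((Fin.last n).insertNth (cc1 n (Fin.last n)) y) *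
      (φ ((Fin.last n).insertNth (cc1 n (Fin.last n)) y) *
        φ ((Fin.last n).insertNth (cc1 n (Fin.last n)) y)) = f y ^ 2
  rw [h2, one_mul, h1, Fin.insertNth_last', hbc y hy, sq]

end aux


lemma endgame (α M lam₁ a lam P G Wq Tr : ℝ) (hα : 0 < α) (hM0 : 0 ≤ M) (ha : 0 < a)
    (hlam₁0 : 0 ≤ lam₁) (hlam₁α : lam₁ < α) (hlamle : lam ≤ lam₁)
    (hP : 0 ≤ P) (hG : 0 ≤ G) (hTr : 0 ≤ Tr)
    (hcoer : α * P ≤ G + Wq) (h5 : -M * P ≤ Wq) (h3 : Tr ≤ (1 + a⁻¹) * P + G) :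
    (1 - lam₁ / α) * min (α / (2 * (α + M))) ((α / 2) / (1 + a⁻¹)) * Tr
      ≤ G + Wq - lam * P := by
  have hαM : 0 < α + M := by linarith
  have h1a : (0:ℝ) < 1 + a⁻¹ := by positivity
  set θ : ℝ := α / (2 * (α + M)) with hθdef
  have hθ0 : 0 < θ := by positivity
  have hθhalf : θ * (α + M) = α / 2 := by
    rw [hθdef]; field_simp
  have hθ1 : θ ≤ 1 := by
    rw [hθdef, div_le_one (by linarith)]; linarith
  set c : ℝ := min θ ((α / 2) / (1 + a⁻¹)) with hcdef
  have hc0 : 0 < c := lt_min hθ0 (by positivity)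
  set δ : ℝ := 1 - lam₁ / α with hδdef
  have hδ : 0 < δ := by
    have : lam₁ / α < 1 := (div_lt_one hα).2 hlam₁α
    rw [hδdef]; linarith
  have hQ0 : 0 ≤ G + Wq := le_trans (mul_nonneg hα.le hP) hcoer
  have s1 : δ * (G + Wq) ≤ (G + Wq) - lam * P := by
    have k1 : lam * P ≤ lam₁ * P := mul_le_mul_of_nonneg_right hlamle hP
    have k2 : (lam₁ / α) * (α * P) ≤ (lam₁ / α) * (G + Wq) :=
      mul_le_mul_of_nonneg_left hcoer (div_nonneg hlam₁0 hα.le)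
    have k3 : (lam₁ / α) * (α * P) = lam₁ * P := by
      field_simp
    rw [hδdef]
    nlinarith [k1, k2, k3]
  have s2 : θ * G + (α / 2) * P ≤ G + Wq := by
    have f1 : (1 - θ) * (α * P) ≤ (1 - θ) * (G + Wq) :=
      mul_le_mul_of_nonneg_left hcoer (by linarith)
    have f2 : θ * (-M * P) ≤ θ * Wq := mul_le_mul_of_nonneg_left h5 hθ0.le
    have f3 : θ * (α + M) * P = (α / 2) * P := by rw [hθhalf]
    nlinarith [f1, f2, f3]
  have s3 : c * ((1 + a⁻¹) * P + G) ≤ θ * G + (α / 2) * P := by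
    have f4 : c * G ≤ θ * G := mul_le_mul_of_nonneg_right (min_le_left _ _) hG
    have f5 : c * (1 + a⁻¹) ≤ α / 2 := by
      have hm := min_le_right θ ((α / 2) / (1 + a⁻¹))
      calc c * (1 + a⁻¹) ≤ ((α / 2) / (1 + a⁻¹)) * (1 + a⁻¹) :=
            mul_le_mul_of_nonneg_right hm h1a.le
        _ = α / 2 := div_mul_cancel₀ _ h1a.ne'
    have f6 : c * (1 + a⁻¹) * P ≤ (α / 2) * P := mul_le_mul_of_nonneg_right f5 hP
    nlinarith [f4, f6]
  have s4 : δ * c * Tr ≤ δ * c * ((1 + a⁻¹) * P + G) :=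
    mul_le_mul_of_nonneg_left h3 (mul_pos hδ hc0).le
  have s5 : δ * (c * ((1 + a⁻¹) * P + G)) ≤ δ * (θ * G + (α / 2) * P) :=
    mul_le_mul_of_nonneg_left s3 hδ.le
  have s6 : δ * (θ * G + (α / 2) * P) ≤ δ * (G + Wq) :=
    mul_le_mul_of_nonneg_left s2 hδ.le
  have s45 : δ * c * Tr ≤ δ * (θ * G + (α / 2) * P) := by
    calc δ * c * Tr ≤ δ * c * ((1 + a⁻¹) * P + G) := s4
      _ = δ * (c * ((1 + a⁻¹) * P + G)) := by ring
      _ ≤ δ * (θ * G + (α / 2) * P) := s5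
  exact le_trans s45 (le_trans s6 s1)


/-- Positivity of the Dirichlet-to-Neumann operator: if `α = inf σ(P₀^N) > 0` (expressed
by coercivity of the Neumann form of `−Δ + W₀` on `Ω₀`) and `λ₀ < α`, then there is
`ε > 0` such that `⟨T(λ)f, f⟩_{L²(S)} ≥ ε‖f‖²_{L²(S)}` for all `0 ≤ λ ≤ λ₀` and all `f`,
where `T(λ)f = ∂_ν φ|_S` for the solution `φ` of the mixed boundary value problem. -/
theorem dtn_positive {n : ℕ} (a α lam₀ : ℝ) (ha : 0 < a) (hα : 0 < α) (hlam₀ : lam₀ < α)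
    (W₀ : (Fin (n + 1) → ℝ) → ℝ) (hW₀ : Continuous W₀)
    (hcoerc : ∀ u : (Fin (n + 1) → ℝ) → ℝ, ContDiff ℝ 1 u →
      α * ∫ x in Omega0 n a, (u x) ^ 2 ≤
        ∫ x in Omega0 n a, (gradSqd u x + W₀ x * (u x) ^ 2)) :
    ∃ ε > (0 : ℝ), ∀ lam : ℝ, lam ∈ Set.Icc 0 lam₀ →
      ∀ (f : (Fin n → ℝ) → ℝ) (φ : (Fin (n + 1) → ℝ) → ℝ), ContDiff ℝ 2 φ →
      (∀ x ∈ Omega0 n a, -lap φ x + (W₀ x - lam) * φ x = 0) →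
      (∀ x' ∈ Set.Icc (0 : Fin n → ℝ) 1, φ (Fin.snoc x' 0) = f x') →
      (∀ i : Fin n, ∀ x ∈ Omega0 n a,
        (x i.castSucc = 0 ∨ x i.castSucc = 1) → pd i.castSucc φ x = 0) →
      (∀ x ∈ Omega0 n a, x (Fin.last n) = -a → pd (Fin.last n) φ x = 0) →
      ε * ∫ x' in Set.Icc (0 : Fin n → ℝ) 1, (f x') ^ 2 ≤
        ∫ x' in Set.Icc (0 : Fin n → ℝ) 1, pd (Fin.last n) φ (Fin.snoc x' 0) * f x' := by
  obtain ⟨M, hM0, hM⟩ : ∃ M : ℝ, 0 ≤ M ∧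
      ∀ x ∈ Set.Icc (cc0 n a) (cc1 n), |W₀ x| ≤ M := by
    obtain ⟨C, hC⟩ := (isCompact_Icc (a := cc0 n a) (b := cc1 n)).exists_bound_of_continuousOn
      hW₀.continuousOn
    exact ⟨max C 0, le_max_right _ _,
      fun x hx => le_trans (by simpa [Real.norm_eq_abs] using hC x hx) (le_max_left _ _)⟩
  have hlam₁0 : 0 ≤ max lam₀ 0 := le_max_right _ _
  have hlam₁α : max lam₀ 0 < α := max_lt hlam₀ hα
  have hαM : 0 < α + M := by linarith
  have h1a : (0:ℝ) < 1 + a⁻¹ := by positivity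
  have hδ : 0 < 1 - max lam₀ 0 / α := by
    have : max lam₀ 0 / α < 1 := (div_lt_one hα).2 hlam₁α
    linarith
  have hc0 : 0 < min (α / (2 * (α + M))) ((α / 2) / (1 + a⁻¹)) :=
    lt_min (by positivity) (by positivity)
  refine ⟨(1 - max lam₀ 0 / α) * min (α / (2 * (α + M))) ((α / 2) / (1 + a⁻¹)),
    mul_pos hδ hc0, ?_⟩
  intro lam hlam f φ hφ hpde hbc hneu hbot
  have hlamle : lam ≤ max lam₀ 0 := le_trans hlam.2 (le_max_left _ _)
  -- integrability
  have hcφ2 : Continuous fun x : Fin (n+1) → ℝ => φ x ^ 2 := hφ.continuous.pow 2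
  have hIφ2 : IntegrableOn (fun x => φ x ^ 2) (Set.Icc (cc0 n a) (cc1 n)) :=
    hcφ2.integrableOn_Icc
  have hcgrad : Continuous (gradSqd φ) :=
    continuous_finset_sum _ fun i _ => (pd_continuous i (hφ.of_le one_le_two)).pow 2
  have hIgrad : IntegrableOn (gradSqd φ) (Set.Icc (cc0 n a) (cc1 n)) :=
    hcgrad.integrableOn_Icc
  have hIW : IntegrableOn (fun x => W₀ x * φ x ^ 2) (Set.Icc (cc0 n a) (cc1 n)) :=
    (hW₀.mul hcφ2).integrableOn_Icc
  have hIGW : IntegrableOn (fun x => gradSqd φ x + W₀ x * φ x ^ 2)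
      (Set.Icc (cc0 n a) (cc1 n)) := hIgrad.add hIW
  have hP : 0 ≤ ∫ x in Set.Icc (cc0 n a) (cc1 n), φ x ^ 2 :=
    setIntegral_nonneg measurableSet_Icc fun x _ => sq_nonneg _
  have hG : 0 ≤ ∫ x in Set.Icc (cc0 n a) (cc1 n), gradSqd φ x :=
    setIntegral_nonneg measurableSet_Icc fun x _ =>
      Finset.sum_nonneg fun i _ => sq_nonneg _
  have hTr : 0 ≤ ∫ x' in Set.Icc (0 : Fin n → ℝ) 1, f x' ^ 2 :=
    setIntegral_nonneg measurableSet_Icc fun x _ => sq_nonneg _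
  -- coercivity
  have hcoer : α * ∫ x in Set.Icc (cc0 n a) (cc1 n), φ x ^ 2 ≤
      (∫ x in Set.Icc (cc0 n a) (cc1 n), gradSqd φ x) +
        ∫ x in Set.Icc (cc0 n a) (cc1 n), W₀ x * φ x ^ 2 := by
    have h := hcoerc φ (hφ.of_le one_le_two)
    rw [Omega0_eq] at h
    rwa [integral_add hIgrad hIW] at h
  -- Wq lower bound
  have h5 : -M * ∫ x in Set.Icc (cc0 n a) (cc1 n), φ x ^ 2 ≤
      ∫ x in Set.Icc (cc0 n a) (cc1 n), W₀ x * φ x ^ 2 := by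
    have h : (∫ x in Set.Icc (cc0 n a) (cc1 n), -M * φ x ^ 2) ≤
        ∫ x in Set.Icc (cc0 n a) (cc1 n), W₀ x * φ x ^ 2 := by
      apply setIntegral_mono_on (hIφ2.const_mul (-M)) hIW measurableSet_Icc
      intro x hx
      have := abs_le.1 (hM x hx)
      nlinarith [sq_nonneg (φ x)]
    rwa [integral_const_mul] at h
  -- Green identity
  have hg := green ha lam W₀ f φ hφ hpde hbc hneu hbot
  have hGreen : (∫ x' in Set.Icc (0 : Fin n → ℝ) 1, pd (Fin.last n) φ (Fin.snoc x' 0) * f x')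
      = ((∫ x in Set.Icc (cc0 n a) (cc1 n), gradSqd φ x) +
          ∫ x in Set.Icc (cc0 n a) (cc1 n), W₀ x * φ x ^ 2) -
        lam * ∫ x in Set.Icc (cc0 n a) (cc1 n), φ x ^ 2 := by
    rw [← hg]
    have e : (fun x => gradSqd φ x + (W₀ x - lam) * φ x ^ 2)
        = fun x => (gradSqd φ x + W₀ x * φ x ^ 2) - lam * φ x ^ 2 := by
      funext x; ring
    rw [e, integral_sub hIGW (hIφ2.const_mul lam), integral_add hIgrad hIW,
      integral_const_mul]
  -- trace bound
  have h3 : (∫ x' in Set.Icc (0 : Fin n → ℝ) 1, f x' ^ 2) ≤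
      (1 + a⁻¹) * (∫ x in Set.Icc (cc0 n a) (cc1 n), φ x ^ 2) +
        ∫ x in Set.Icc (cc0 n a) (cc1 n), gradSqd φ x := by
    have ht := trace_id ha f φ hφ hbc
    rw [← ht]
    have step : (∫ x in Set.Icc (cc0 n a) (cc1 n),
        (a⁻¹ * (φ x * φ x) + ((x (Fin.last n) + a) / a) *
          (pd (Fin.last n) φ x * φ x + φ x * pd (Fin.last n) φ x)))
        ≤ ∫ x in Set.Icc (cc0 n a) (cc1 n), ((1 + a⁻¹) * φ x ^ 2 + gradSqd φ x) := by
      have hIL : IntegrableOn (fun x => a⁻¹ * (φ x * φ x) + ((x (Fin.last n) + a) / a) *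
          (pd (Fin.last n) φ x * φ x + φ x * pd (Fin.last n) φ x))
          (Set.Icc (cc0 n a) (cc1 n)) := by
        apply Continuous.integrableOn_Icc
        have hc := pd_continuous (Fin.last n) (hφ.of_le one_le_two)
        have hwc : Continuous fun x : Fin (n+1) → ℝ => (x (Fin.last n) + a) / a :=
          (by fun_prop)
        exact (continuous_const.mul (hφ.continuous.mul hφ.continuous)).add
          (hwc.mul ((hc.mul hφ.continuous).add (hφ.continuous.mul hc)))
      have hIR : IntegrableOn (fun x => (1 + a⁻¹) * φ x ^ 2 + gradSqd φ x)
          (Set.Icc (cc0 n a) (cc1 n)) := (hIφ2.const_mul _).add hIgrad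
      apply setIntegral_mono_on hIL hIR measurableSet_Icc
      intro x hx
      have hxl1 : -a ≤ x (Fin.last n) := by
        have h1 := hx.1 (Fin.last n)
        simpa [cc0, Fin.snoc_last] using h1
      have hxl2 : x (Fin.last n) ≤ 0 := by
        have h2 := hx.2 (Fin.last n)
        simpa [cc1, Fin.snoc_last] using h2
      have hw0 : 0 ≤ (x (Fin.last n) + a) / a := div_nonneg (by linarith) ha.le
      have hw1 : (x (Fin.last n) + a) / a ≤ 1 := by
        rw [div_le_one ha]; linarith
      have hψ2 : pd (Fin.last n) φ x ^ 2 ≤ gradSqd φ x :=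
        Finset.single_le_sum (f := fun i => pd i φ x ^ 2)
          (fun i _ => sq_nonneg _) (Finset.mem_univ _)
      nlinarith [mul_nonneg hw0 (sq_nonneg (φ x - pd (Fin.last n) φ x)),
        mul_nonneg (sub_nonneg.2 hw1)
          (add_nonneg (sq_nonneg (φ x)) (sq_nonneg (pd (Fin.last n) φ x)))]
    calc (∫ x in Set.Icc (cc0 n a) (cc1 n),
        (a⁻¹ * (φ x * φ x) + ((x (Fin.last n) + a) / a) *
          (pd (Fin.last n) φ x * φ x + φ x * pd (Fin.last n) φ x)))
        ≤ ∫ x in Set.Icc (cc0 n a) (cc1 n), ((1 + a⁻¹) * φ x ^ 2 + gradSqd φ x) := step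
      _ = (1 + a⁻¹) * (∫ x in Set.Icc (cc0 n a) (cc1 n), φ x ^ 2) +
            ∫ x in Set.Icc (cc0 n a) (cc1 n), gradSqd φ x := by
          rw [integral_add (hIφ2.const_mul _) hIgrad, integral_const_mul]
  rw [hGreen]
  exact endgame α M (max lam₀ 0) a lam _ _ _ _ hα hM0 ha hlam₁0 hlam₁α hlamle
    hP hG hTr hcoer h5 h3
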